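/- arXiv:2103.00761 — 5 statements merged into one kernel-verified Lean document; each statement's English description precedes it below -/
import Mathlib

section
/- Let n ≥ 1, let x : Fin n → ℝ satisfy 0 ≤ x i for all i, and let i₀ ∈ Fin n be an index at which x attains its minimum. For any threshold c : ℝ and any clique S of the threshold graph G_c(x) with at least 2 elements, the set S ∪ {i₀} is also a clique of G_c(x). (Hence the clique complex of G_c(x) is the union of a cone with apex i₀ and isolated vertices, so all its Betti numbers βₖ for k > 0 vanish.) -/
/-- The threshold graph `G_c(x)`: distinct vertices `i`, `j` are adjacent
iff `x i * x j ≤ c`. -/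
def thresholdGraph {n : ℕ} (x : Fin n → ℝ) (c : ℝ) : SimpleGraph (Fin n) where
  Adj i j := i ≠ j ∧ x i * x j ≤ c
  symm := by
    constructor
    intro i j h
    exact ⟨h.1.symm, by rw [mul_comm]; exact h.2⟩
  loopless := by
    constructor
    intro i h
    exact h.1 rfl

theorem stmt_1 (n : ℕ) (hn : 1 ≤ n) (x : Fin n → ℝ) (hx : ∀ i, 0 ≤ x i)
    (i₀ : Fin n) (hmin : ∀ i, x i₀ ≤ x i) (c : ℝ) (S : Set (Fin n))
    (hS : (thresholdGraph x c).IsClique S) (hcard : 2 ≤ S.ncard) :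
    (thresholdGraph x c).IsClique (S ∪ {i₀}) := by
  have key : ∀ j ∈ S, j ≠ i₀ → (thresholdGraph x c).Adj i₀ j := by
    intro j hj hji
    obtain ⟨k, hk, hkj⟩ : ∃ k ∈ S, k ≠ j := by
      by_contra h
      push_neg at h
      have : S ⊆ {j} := fun a ha => h a ha
      have := Set.ncard_le_ncard this (Set.finite_singleton j)
      rw [Set.ncard_singleton] at this
      omega
    have hadj := hS hk hj hkj
    refine ⟨hji.symm, ?_⟩
    calc x i₀ * x j ≤ x k * x j := by
          exact mul_le_mul_of_nonneg_right (hmin k) (hx j)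
      _ ≤ c := hadj.2
  intro a ha b hb hab
  rcases ha with ha | ha <;> rcases hb with hb | hb
  · exact hS ha hb hab
  · simp only [Set.mem_singleton_iff] at hb; subst hb
    exact (key a ha hab).symm
  · simp only [Set.mem_singleton_iff] at ha; subst ha
    exact key b hb (Ne.symm hab)
  · simp only [Set.mem_singleton_iff] at ha hb; exact absurd (ha.trans hb.symm) hab
end

section
/- Let n ≥ 1, let x : Fin n → ℝ satisfy 0 ≤ x i for all i, and let i₁ ∈ Fin n be an index at which x attains its maximum. For any threshold c : ℝ and any clique S of the reverse threshold graph H_c(x) with at least 2 elements, the set S ∪ {i₁} is also a clique of H_c(x). -/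
/-- The reverse threshold graph `H_c(x)`: distinct vertices `i`, `j` are adjacent
iff `x i * x j ≥ c`. -/
def revThresholdGraph {n : ℕ} (x : Fin n → ℝ) (c : ℝ) : SimpleGraph (Fin n) where
  Adj i j := i ≠ j ∧ c ≤ x i * x j
  symm := by
    constructor
    intro i j h
    exact ⟨h.1.symm, by rw [mul_comm]; exact h.2⟩
  loopless := by
    constructor
    intro i h
    exact h.1 rfl

theorem stmt_3 (n : ℕ) (hn : 1 ≤ n) (x : Fin n → ℝ) (hx : ∀ i, 0 ≤ x i)
    (i₁ : Fin n) (hmax : ∀ i, x i ≤ x i₁) (c : ℝ) (S : Set (Fin n))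
    (hS : (revThresholdGraph x c).IsClique S) (hcard : 2 ≤ S.ncard) :
    (revThresholdGraph x c).IsClique (S ∪ {i₁}) := by
  have key : ∀ a ∈ S, a ≠ i₁ → c ≤ x a * x i₁ := by
    intro a ha hne
    have : 1 < S.ncard := hcard
    obtain ⟨b, hb, hba⟩ : ∃ b ∈ S, b ≠ a := by
      by_contra h
      push_neg at h
      have : S ⊆ {a} := fun z hz => h z hz
      have := Set.ncard_le_ncard this (Set.finite_singleton a)
      rw [Set.ncard_singleton] at this
      omega
    have hadj := hS ha hb (Ne.symm hba)
    calc c ≤ x a * x b := hadj.2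
      _ ≤ x a * x i₁ := mul_le_mul_of_nonneg_left (hmax b) (hx a)
  intro a ha b hb hab
  rcases ha with ha | ha <;> rcases hb with hb | hb
  · exact hS ha hb hab
  · rcases hb; exact ⟨hab, key a ha hab⟩
  · rcases ha
    refine ⟨hab, ?_⟩
    rw [mul_comm]
    exact key b hb (Ne.symm hab)
  · exact absurd (ha.trans hb.symm) hab
end

section
/- Let x : Fin n → ℝ with x i ≠ 0 for all i, and suppose both B = {i | x i < 0} and R = {i | x i > 0} are nonempty. Let c₀ be the maximum of x i * x j over all pairs with i ∈ B and j ∈ R (so c₀ < 0). Then distinct vertices i, j are adjacent in the threshold graph G_{c₀}(x) if and only if x i and x j have opposite signs; that is, G_{c₀}(x) is the complete bipartite graph with parts B and R. -/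
theorem stmt_5 (n : ℕ) (x : Fin n → ℝ) (hx : ∀ i, x i ≠ 0)
    (hB : ∃ i, x i < 0) (hR : ∃ i, 0 < x i) (c₀ : ℝ)
    (hc₀ : IsGreatest {r : ℝ | ∃ i j : Fin n, x i < 0 ∧ 0 < x j ∧ r = x i * x j} c₀) :
    c₀ < 0 ∧
    ∀ i j : Fin n, i ≠ j →
      ((thresholdGraph x c₀).Adj i j ↔ (x i < 0 ∧ 0 < x j) ∨ (0 < x i ∧ x j < 0)) := by
  obtain ⟨⟨a, b, ha, hb, hab⟩, hub⟩ := hc₀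
  have hc0 : c₀ < 0 := hab ▸ mul_neg_of_neg_of_pos ha hb
  refine ⟨hc0, fun i j hij => ?_⟩
  constructor
  · rintro ⟨-, hle⟩
    have hne : x i * x j < 0 := lt_of_le_of_lt hle hc0
    rcases (hx i).lt_or_gt with hi | hi
    · left; exact ⟨hi, by nlinarith⟩
    · right; exact ⟨hi, by nlinarith⟩
  · rintro (⟨hi, hj⟩ | ⟨hi, hj⟩)
    · exact ⟨hij, hub ⟨i, j, hi, hj, rfl⟩⟩
    · exact ⟨hij, by rw [mul_comm]; exact hub ⟨j, i, hj, hi, rfl⟩⟩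
end

section
/- Let x : Fin n → ℝ with x i ≠ 0 for all i, and suppose both B = {i | x i < 0} and R = {i | x i > 0} are nonempty. Let v ∈ Fin n be an index minimizing |x i|, and fix a threshold c ≤ 0. Then v is adjacent in the reverse threshold graph H_c(x) to every vertex w ≠ v that either has the same sign as x v, or is incident to some crossing edge of H_c(x) (an edge with one endpoint in B and one in R). -/
theorem stmt_12 (n : ℕ) (x : Fin n → ℝ) (hx : ∀ i, x i ≠ 0)
    (hB : ∃ i, x i < 0) (hR : ∃ i, 0 < x i)
    (v : Fin n) (hv : ∀ i, |x v| ≤ |x i|) (c : ℝ) (hc : c ≤ 0) :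
    ∀ w : Fin n, w ≠ v →
      ((x v < 0 ∧ x w < 0) ∨ (0 < x v ∧ 0 < x w) ∨
        (∃ u, (revThresholdGraph x c).Adj w u ∧
          ((x w < 0 ∧ 0 < x u) ∨ (0 < x w ∧ x u < 0)))) →
      (revThresholdGraph x c).Adj v w := by
  intro w hwv h
  refine ⟨hwv.symm, ?_⟩
  rcases h with ⟨h1, h2⟩ | ⟨h1, h2⟩ | ⟨u, ⟨_, hadj⟩, hcross⟩
  · exact hc.trans (mul_pos_of_neg_of_neg h1 h2).le
  · exact hc.trans (mul_pos h1 h2).le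
  · -- x w * x u < 0 in both cases
    have hwu : x w * x u < 0 := by
      rcases hcross with ⟨h1, h2⟩ | ⟨h1, h2⟩
      · exact mul_neg_of_neg_of_pos h1 h2
      · exact mul_neg_of_pos_of_neg h1 h2
    by_cases hsign : 0 ≤ x v * x w
    · exact hc.trans hsign
    · push_neg at hsign
      refine hadj.trans ?_
      have h1 : |x v * x w| ≤ |x w * x u| := by
        rw [abs_mul, abs_mul, mul_comm (|x w|)]
        exact mul_le_mul_of_nonneg_right (hv u) (abs_nonneg _)
      rw [abs_of_neg hsign, abs_of_neg hwu] at h1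
      linarith
end

section
/- Let n ≥ 1, let α : Fin n → ℝ satisfy 0 ≤ α i for all i, and let i₀ ∈ Fin n be an index at which α attains its minimum. For any c : ℝ, consider the simple graph D_c on Fin n in which distinct vertices i and j are adjacent if and only if √(α i ^ 2 + α j ^ 2) ≤ c. Then for any clique S of D_c with at least 2 elements, the set S ∪ {i₀} is also a clique of D_c. (Hence the clique complex of D_c is the union of a cone and isolated vertices, so all Betti numbers βₖ for k > 0 of the distance filtration of an axis simplex vanish.) -/
/-- The distance filtration graph `D_c` of an axis simplex: distinct vertices
`i`, `j` are adjacent iff `√(α i ^ 2 + α j ^ 2) ≤ c`. -/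
def distGraph {n : ℕ} (α : Fin n → ℝ) (c : ℝ) : SimpleGraph (Fin n) where
  Adj i j := i ≠ j ∧ Real.sqrt (α i ^ 2 + α j ^ 2) ≤ c
  symm := by
    constructor
    intro i j h
    exact ⟨h.1.symm, by rw [add_comm]; exact h.2⟩
  loopless := by
    constructor
    intro i h
    exact h.1 rfl

theorem stmt_14 (n : ℕ) (hn : 1 ≤ n) (α : Fin n → ℝ) (hα : ∀ i, 0 ≤ α i)
    (i₀ : Fin n) (hmin : ∀ i, α i₀ ≤ α i) (c : ℝ) (S : Set (Fin n))
    (hS : (distGraph α c).IsClique S) (hcard : 2 ≤ S.ncard) :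
    (distGraph α c).IsClique (S ∪ {i₀}) := by
  -- key: for i ∈ S with i ≠ i₀, i₀ is adjacent to i
  have key : ∀ i ∈ S, i ≠ i₀ → (distGraph α c).Adj i₀ i := by
    intro i hi hne
    obtain ⟨j, hj, hji⟩ : ∃ j ∈ S, j ≠ i := by
      by_contra h
      push_neg at h
      have : S ⊆ {i} := fun x hx => h x hx
      have := Set.ncard_le_ncard this (Set.finite_singleton i)
      rw [Set.ncard_singleton] at this
      omega
    have hadj := hS hi hj (fun h => hji h.symm)
    have h2 : Real.sqrt (α i ^ 2 + α j ^ 2) ≤ c := hadj.2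
    refine ⟨hne.symm, le_trans (Real.sqrt_le_sqrt ?_) (by rwa [add_comm] at h2)⟩
    have : α i₀ ^ 2 ≤ α j ^ 2 := pow_le_pow_left₀ (hα i₀) (hmin j) 2
    linarith
  intro x hx y hy hxy
  rcases hx with hx | hx <;> rcases hy with hy | hy
  · exact hS hx hy hxy
  · simp only [Set.mem_singleton_iff] at hy; subst hy
    exact (key x hx hxy).symm
  · simp only [Set.mem_singleton_iff] at hx; subst hx
    exact key y hy (Ne.symm hxy)
  · simp only [Set.mem_singleton_iff] at hx hy; exact absurd (hx.trans hy.symm) hxy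
end
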